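/- arXiv:1502.06036 — 2 statements merged into one kernel-verified Lean document; each statement's English description precedes it below -/
import Mathlib

section
/- Let (X, 𝒳, μ) be a standard probability space and let (αₙ) be a sequence of countable measurable partitions with ∑ₙ H(αₙ) < ∞. Then the join ⋁ₙ αₙ (the partition whose atoms are the nonempty intersections ⋂ₙ Aₙ with Aₙ ∈ αₙ) is, up to null sets, a countable partition and H(⋁ₙ αₙ) ≤ ∑ₙ H(αₙ). -/
open MeasureTheory
open scoped ENNReal

/-- Shannon entropy of a countable family of sets (intended: a partition), with 0 log 0 = 0. -/
noncomputable def partitionEntropy {X : Type*} [MeasurableSpace X] (μ : Measure X)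
    {ι : Type*} (A : ι → Set X) : ℝ≥0∞ :=
  ∑' i, ENNReal.ofReal (Real.negMulLog (μ (A i)).toReal)

open Filter Topology

set_option linter.unusedSectionVars false

lemma real_key {p r : ℝ} (hp : 0 ≤ p) (hr : 0 ≤ r) (h0 : r = 0 → p = 0) :
    Real.negMulLog p + p ≤ -(p * Real.log r) + r := by
  rcases eq_or_lt_of_le hp with hp0 | hp0
  · simp [← hp0, Real.negMulLog, hr]
  · have hr0 : 0 < r := by
      rcases eq_or_lt_of_le hr with h | h
      · exact absurd (h0 h.symm) (ne_of_gt hp0)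
      · exact h
    have hlog : Real.log (r / p) ≤ r / p - 1 :=
      Real.log_le_sub_one_of_pos (div_pos hr0 hp0)
    have hld : Real.log (r / p) = Real.log r - Real.log p :=
      Real.log_div (ne_of_gt hr0) (ne_of_gt hp0)
    have h2 : p * (Real.log r - Real.log p) ≤ r - p := by
      rw [← hld]
      have h3 := mul_le_mul_of_nonneg_left hlog hp
      calc p * Real.log (r/p) ≤ p * (r/p - 1) := h3
        _ = r - p := by field_simp
    simp only [Real.negMulLog]
    nlinarith

lemma ofReal_negMulLog_eq (m : ℝ≥0∞) (hm : m ≠ ⊤) :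
    ENNReal.ofReal (Real.negMulLog m.toReal) = m * ENNReal.ofReal (-Real.log m.toReal) := by
  have h : Real.negMulLog m.toReal = m.toReal * (-Real.log m.toReal) := by
    rw [Real.negMulLog]; ring
  rw [h, ENNReal.ofReal_mul ENNReal.toReal_nonneg, ENNReal.ofReal_toReal hm]

section Sub
variable {X : Type*} [MeasurableSpace X] (μ : Measure X) [IsProbabilityMeasure μ]
variable {I J : Type*} [Countable I] [Countable J]

lemma toReal_prob_le_one {μ : Measure X} [IsProbabilityMeasure μ] (s : Set X) :
    (μ s).toReal ≤ 1 :=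
  ENNReal.toReal_le_of_le_ofReal zero_le_one (by simpa using prob_le_one (μ := μ) (s := s))

lemma entropy_pair_le (P : I → Set X) (Q : J → Set X)
    (hPm : ∀ i, MeasurableSet (P i)) (hQm : ∀ j, MeasurableSet (Q j))
    (hPd : Pairwise (Function.onFun Disjoint P)) (hQd : Pairwise (Function.onFun Disjoint Q))
    (hPu : (⋃ i, P i) = Set.univ) (hQu : (⋃ j, Q j) = Set.univ) :
    partitionEntropy μ (fun ij : I × J => P ij.1 ∩ Q ij.2)
      ≤ partitionEntropy μ P + partitionEntropy μ Q := by
  classical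
  set p : I → J → ℝ≥0∞ := fun i j => μ (P i ∩ Q j) with hpdef
  -- row and column sums
  have rowsum : ∀ i, ∑' j, p i j = μ (P i) := by
    intro i
    have h1 : (⋃ j, P i ∩ Q j) = P i := by rw [← Set.inter_iUnion, hQu, Set.inter_univ]
    have h2 := measure_iUnion (μ := μ) (f := fun j => P i ∩ Q j)
      (fun j j' h => (hQd h).mono Set.inter_subset_right Set.inter_subset_right)
      (fun j => (hPm i).inter (hQm j))
    rw [h1] at h2
    simpa [p] using h2.symm
  have colsum : ∀ j, ∑' i, p i j = μ (Q j) := by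
    intro j
    have h1 : (⋃ i, P i ∩ Q j) = Q j := by rw [← Set.iUnion_inter, hPu, Set.univ_inter]
    have h2 := measure_iUnion (μ := μ) (f := fun i => P i ∩ Q j)
      (fun i i' h => (hPd h).mono Set.inter_subset_left Set.inter_subset_left)
      (fun i => (hPm i).inter (hQm j))
    rw [h1] at h2
    simpa [p] using h2.symm
  have sumP : ∑' i, μ (P i) = 1 := by
    rw [← measure_iUnion hPd hPm, hPu, measure_univ]
  have sumQ : ∑' j, μ (Q j) = 1 := by
    rw [← measure_iUnion hQd hQm, hQu, measure_univ]
  -- pointwise key inequality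
  have key : ∀ ij : I × J,
      ENNReal.ofReal (Real.negMulLog (p ij.1 ij.2).toReal) + p ij.1 ij.2
        ≤ ENNReal.ofReal (-((p ij.1 ij.2).toReal
            * Real.log ((μ (P ij.1)).toReal * (μ (Q ij.2)).toReal)))
          + μ (P ij.1) * μ (Q ij.2) := by
    rintro ⟨i, j⟩
    set a := (μ (P i)).toReal
    set b := (μ (Q j)).toReal
    set pr := (p i j).toReal
    have h0 : a * b = 0 → pr = 0 := by
      intro h
      rcases mul_eq_zero.1 h with h | h
      · have : μ (P i) = 0 := by
          simpa [a, ENNReal.toReal_eq_zero_iff, measure_ne_top] using h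
        have : p i j = 0 := le_antisymm (le_trans (measure_mono Set.inter_subset_left) this.le)
          zero_le
        simp [pr, this]
      · have : μ (Q j) = 0 := by
          simpa [b, ENNReal.toReal_eq_zero_iff, measure_ne_top] using h
        have : p i j = 0 := le_antisymm (le_trans (measure_mono Set.inter_subset_right) this.le)
          zero_le
        simp [pr, this]
    have hab0 : 0 ≤ a * b := mul_nonneg ENNReal.toReal_nonneg ENNReal.toReal_nonneg
    have hab1 : a * b ≤ 1 :=
      mul_le_one₀ (toReal_prob_le_one _) ENNReal.toReal_nonneg (toReal_prob_le_one _)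
    have hkey := real_key (p := pr) (r := a * b) ENNReal.toReal_nonneg hab0 h0
    have hnn1 : 0 ≤ Real.negMulLog pr :=
      Real.negMulLog_nonneg ENNReal.toReal_nonneg (toReal_prob_le_one _)
    have hnn2 : 0 ≤ -(pr * Real.log (a * b)) := by
      have := Real.log_nonpos hab0 hab1
      nlinarith [ENNReal.toReal_nonneg (a := p i j)]
    calc ENNReal.ofReal (Real.negMulLog pr) + p i j
        = ENNReal.ofReal (Real.negMulLog pr + pr) := by
          rw [ENNReal.ofReal_add hnn1 ENNReal.toReal_nonneg,
            ENNReal.ofReal_toReal (measure_ne_top μ _)]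
      _ ≤ ENNReal.ofReal (-(pr * Real.log (a * b)) + a * b) := ENNReal.ofReal_le_ofReal hkey
      _ = ENNReal.ofReal (-(pr * Real.log (a * b))) + ENNReal.ofReal (a * b) :=
          ENNReal.ofReal_add hnn2 hab0
      _ = ENNReal.ofReal (-(pr * Real.log (a * b))) + μ (P i) * μ (Q j) := by
          rw [ENNReal.ofReal_mul ENNReal.toReal_nonneg,
            ENNReal.ofReal_toReal (measure_ne_top μ _), ENNReal.ofReal_toReal (measure_ne_top μ _)]
  -- sum up
  have hsum := ENNReal.tsum_le_tsum key
  rw [ENNReal.tsum_add, ENNReal.tsum_add] at hsum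
  have htot : ∑' ij : I × J, p ij.1 ij.2 = 1 := by
    rw [ENNReal.tsum_prod']
    simp_rw [rowsum]
    exact sumP
  have htot2 : ∑' ij : I × J, μ (P ij.1) * μ (Q ij.2) = 1 := by
    rw [ENNReal.tsum_prod']
    simp_rw [ENNReal.tsum_mul_left, sumQ, mul_one]
    exact sumP
  -- split the cross-term
  have hsplit : ∀ ij : I × J,
      ENNReal.ofReal (-((p ij.1 ij.2).toReal
          * Real.log ((μ (P ij.1)).toReal * (μ (Q ij.2)).toReal)))
        = p ij.1 ij.2 * ENNReal.ofReal (-Real.log (μ (P ij.1)).toReal)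
          + p ij.1 ij.2 * ENNReal.ofReal (-Real.log (μ (Q ij.2)).toReal) := by
    rintro ⟨i, j⟩
    set a := (μ (P i)).toReal with ha
    set b := (μ (Q j)).toReal with hb
    set pr := (p i j).toReal with hpr
    have hPij : p i j = ENNReal.ofReal pr := (ENNReal.ofReal_toReal (measure_ne_top μ _)).symm
    by_cases hA : a = 0
    · have hp0 : p i j = 0 := by
        have : μ (P i) = 0 := by
          simpa [ha, ENNReal.toReal_eq_zero_iff, measure_ne_top] using hA
        exact le_antisymm (le_trans (measure_mono Set.inter_subset_left) this.le) zero_le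
      simp [hp0, hA, pr]
    · by_cases hB : b = 0
      · have hp0 : p i j = 0 := by
          have : μ (Q j) = 0 := by
            simpa [hb, ENNReal.toReal_eq_zero_iff, measure_ne_top] using hB
          exact le_antisymm (le_trans (measure_mono Set.inter_subset_right) this.le) zero_le
        simp [hp0, hB, pr]
      · have hlog : Real.log (a * b) = Real.log a + Real.log b := Real.log_mul hA hB
        have hnla : 0 ≤ -Real.log a := by
          have := Real.log_nonpos ENNReal.toReal_nonneg (toReal_prob_le_one (μ := μ) (P i))
          linarith
        have hnlb : 0 ≤ -Real.log b := by
          have := Real.log_nonpos ENNReal.toReal_nonneg (toReal_prob_le_one (μ := μ) (Q j))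
          linarith
        have heq : -(pr * Real.log (a * b)) = pr * (-Real.log a) + pr * (-Real.log b) := by
          rw [hlog]; ring
        rw [heq, ENNReal.ofReal_add (mul_nonneg ENNReal.toReal_nonneg hnla)
          (mul_nonneg ENNReal.toReal_nonneg hnlb),
          ENNReal.ofReal_mul ENNReal.toReal_nonneg, ENNReal.ofReal_mul ENNReal.toReal_nonneg,
          ← hPij]
  have hcross : ∑' ij : I × J,
      ENNReal.ofReal (-((p ij.1 ij.2).toReal
          * Real.log ((μ (P ij.1)).toReal * (μ (Q ij.2)).toReal)))
        = partitionEntropy μ P + partitionEntropy μ Q := by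
    rw [tsum_congr hsplit, ENNReal.tsum_add]
    congr 1
    · rw [ENNReal.tsum_prod']
      simp_rw [ENNReal.tsum_mul_right, rowsum]
      exact tsum_congr fun i => (ofReal_negMulLog_eq _ (measure_ne_top μ _)).symm
    · rw [ENNReal.tsum_prod', ENNReal.tsum_comm]
      simp_rw [ENNReal.tsum_mul_right, colsum]
      exact tsum_congr fun j => (ofReal_negMulLog_eq _ (measure_ne_top μ _)).symm
  rw [htot, htot2, hcross] at hsum
  exact (ENNReal.add_le_add_iff_right ENNReal.one_ne_top).1 hsum

end Sub

/-- the `N`-fold join of the partitions `A 0, ..., A (N-1)` -/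
def Bfam {X : Type*} (A : ℕ → ℕ → Set X) (N : ℕ) (v : Fin N → ℕ) : Set X :=
  ⋂ i : Fin N, A i (v i)

def snocEquivNat (N : ℕ) : ((Fin N → ℕ) × ℕ) ≃ (Fin (N + 1) → ℕ) where
  toFun wk := Fin.snoc wk.1 wk.2
  invFun v := (fun i => v i.castSucc, v (Fin.last N))
  left_inv := by
    rintro ⟨w, k⟩
    refine Prod.ext (funext fun i => ?_) ?_ <;> simp
  right_inv v := by
    funext i
    refine Fin.lastCases ?_ (fun j => ?_) i <;> simp

section FJ
variable {X : Type*} [MeasurableSpace X] {μ : Measure X} [IsProbabilityMeasure μ]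
variable {A : ℕ → ℕ → Set X}

lemma Bfam_measurable (hm : ∀ n k, MeasurableSet (A n k)) (N : ℕ) (v : Fin N → ℕ) :
    MeasurableSet (Bfam A N v) :=
  MeasurableSet.iInter fun i => hm i (v i)

lemma Bfam_disjoint (hd : ∀ n, Pairwise (Function.onFun Disjoint (A n))) (N : ℕ) :
    Pairwise (Function.onFun Disjoint (Bfam A N)) := by
  intro v w hvw
  obtain ⟨i, hi⟩ := Function.ne_iff.1 hvw
  exact Disjoint.mono (Set.iInter_subset _ i) (Set.iInter_subset _ i) (hd i hi)

lemma Bfam_cover (hc : ∀ n, (⋃ k, A n k) = Set.univ) (N : ℕ) :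
    (⋃ v, Bfam A N v) = Set.univ := by
  refine Set.eq_univ_of_forall fun x => ?_
  have h : ∀ n : ℕ, ∃ k, x ∈ A n k := fun n => by
    have : x ∈ ⋃ k, A n k := by rw [hc n]; trivial
    exact Set.mem_iUnion.1 this
  choose f hf using h
  exact Set.mem_iUnion.2 ⟨fun i => f i, Set.mem_iInter.2 fun i => hf i⟩

lemma Bfam_succ (N : ℕ) (w : Fin N → ℕ) (k : ℕ) :
    Bfam A (N + 1) (snocEquivNat N (w, k)) = Bfam A N w ∩ A N k := by
  ext x
  simp only [Bfam, Set.mem_iInter, Set.mem_inter_iff, snocEquivNat, Equiv.coe_fn_mk]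
  rw [Fin.forall_fin_succ']
  simp [Fin.snoc_castSucc, Fin.snoc_last]

lemma entropy_Bfam_le (μ : Measure X) [IsProbabilityMeasure μ]
    (hm : ∀ n k, MeasurableSet (A n k))
    (hd : ∀ n, Pairwise (Function.onFun Disjoint (A n)))
    (hc : ∀ n, (⋃ k, A n k) = Set.univ) :
    ∀ N, partitionEntropy μ (Bfam A N) ≤ ∑ n ∈ Finset.range N, partitionEntropy μ (A n) := by
  intro N
  induction N with
  | zero =>
      have h1 : ∀ v : Fin 0 → ℕ, Bfam A 0 v = Set.univ := fun v => by
        simp [Bfam]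
      rw [partitionEntropy]
      simp [h1]
  | succ N ih =>
      have he : partitionEntropy μ (Bfam A (N + 1))
          = partitionEntropy μ (fun wk : (Fin N → ℕ) × ℕ => Bfam A N wk.1 ∩ A N wk.2) := by
        rw [partitionEntropy, partitionEntropy, ← Equiv.tsum_eq (snocEquivNat N)]
        exact tsum_congr fun wk => by rw [← Bfam_succ N wk.1 wk.2]
      rw [he, Finset.sum_range_succ]
      exact le_trans
        (entropy_pair_le μ (Bfam A N) (A N) (Bfam_measurable hm N) (hm N)
          (Bfam_disjoint hd N) (hd N) (Bfam_cover hc N) (hc N))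
        (add_le_add_left ih _)
end FJ

lemma tsum_iSup_nat {f : ℕ → ℕ → ℝ≥0∞} (hf : ∀ k, Monotone (f k)) :
    ∑' k, ⨆ N, f k N = ⨆ N, ∑' k, f k N := by
  simp_rw [ENNReal.tsum_eq_iSup_sum]
  rw [iSup_comm]
  exact iSup_congr fun s => ENNReal.finsetSum_iSup_of_monotone fun a => hf a

lemma iInter_atom_eq {X : Type*} (A : ℕ → ℕ → Set X) (t : ℕ → ℕ) :
    (⋂ n, A n (t n)) = ⋂ N, Bfam A N (fun i => t i) := by
  ext x
  simp only [Set.mem_iInter, Bfam]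
  exact ⟨fun h N i => h i, fun h n => h (n + 1) ⟨n, n.lt_succ_self⟩⟩

lemma Bfam_antitone {X : Type*} (A : ℕ → ℕ → Set X) (t : ℕ → ℕ) :
    Antitone (fun N => Bfam A N (fun i => t i)) := by
  intro N M hNM x hx
  exact Set.mem_iInter.2 fun i =>
    Set.mem_iInter.1 hx ⟨i.1, lt_of_lt_of_le i.2 hNM⟩

/-- If (αₙ) is a sequence of countable measurable partitions with
∑ₙ H(αₙ) < ∞, then the join ⋁ₙ αₙ is, up to null sets, a countable partition (countably many
of its atoms ⋂ₙ Aₙ, Aₙ ∈ αₙ, cover a conull set) and H(⋁ₙ αₙ) ≤ ∑ₙ H(αₙ). -/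
theorem join_of_partitions_countable_and_entropy_subadditive
    {X : Type*} [MeasurableSpace X] [StandardBorelSpace X]
    (μ : Measure X) [IsProbabilityMeasure μ]
    (A : ℕ → ℕ → Set X)
    (hm : ∀ n k, MeasurableSet (A n k))
    (hd : ∀ n, Pairwise (Function.onFun Disjoint (A n)))
    (hc : ∀ n, (⋃ k, A n k) = Set.univ)
    (hfin : (∑' n, partitionEntropy μ (A n)) ≠ ⊤) :
    ∃ c : ℕ → (ℕ → ℕ), Function.Injective c ∧
      μ (⋃ k, ⋂ n, A n (c k n)) = 1 ∧
      partitionEntropy μ (fun k => ⋂ n, A n (c k n)) ≤ ∑' n, partitionEntropy μ (A n) := by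
  classical
  set C := ∑' n, partitionEntropy μ (A n) with hC
  -- choose index functions
  have hex : ∀ (x : X) (n : ℕ), ∃ k, x ∈ A n k := by
    intro x n
    have : x ∈ ⋃ k, A n k := by rw [hc n]; trivial
    exact Set.mem_iUnion.1 this
  choose s hs using hex
  have huniq : ∀ (x : X) (n k : ℕ), x ∈ A n k → k = s x n := by
    intro x n k hk
    by_contra hne
    exact Set.disjoint_left.1 (hd n hne) hk (hs x n)
  -- atoms
  set atom : (ℕ → ℕ) → Set X := fun t => ⋂ n, A n (t n) with hatom
  have hatom_m : ∀ t, MeasurableSet (atom t) := fun t =>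
    MeasurableSet.iInter fun n => hm n (t n)
  have hatom_d : Pairwise (Function.onFun Disjoint atom) := by
    intro t t' h
    obtain ⟨n, hn⟩ := Function.ne_iff.1 h
    exact (hd n hn).mono (Set.iInter_subset _ n) (Set.iInter_subset _ n)
  have hx_atom : ∀ x : X, x ∈ atom (s x) := fun x => Set.mem_iInter.2 fun n => hs x n
  -- countably many positive atoms
  have hScount : Set.Countable {t : ℕ → ℕ | 0 < μ (atom t)} :=
    MeasureTheory.Measure.countable_meas_pos_of_disjoint_of_meas_iUnion_ne_top μ
      hatom_m hatom_d (measure_ne_top μ _)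
  set T : Set (ℕ → ℕ) := {t : ℕ → ℕ | 0 < μ (atom t)} ∪
    Set.range (fun k : ℕ => (fun _ : ℕ => k)) with hT
  have hTc : T.Countable := hScount.union (Set.countable_range _)
  have hTinf : T.Infinite :=
    Set.infinite_of_injective_forall_mem
      (f := fun k : ℕ => (fun _ : ℕ => k))
      (fun a b h => congrFun h 0) (fun k => Or.inr ⟨k, rfl⟩)
  have : Countable T := hTc.to_subtype
  have : Infinite T := hTinf.to_subtype
  obtain ⟨dT⟩ := nonempty_denumerable T
  set e : ℕ ≃ T := (Denumerable.eqv T).symm with he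
  set c : ℕ → (ℕ → ℕ) := fun k => (e k : ℕ → ℕ) with hcdef
  have hcinj : Function.Injective c := fun k k' h =>
    e.injective (Subtype.ext h)
  have hcmem : ∀ t ∈ T, ∃ k, c k = t := fun t ht =>
    ⟨e.symm ⟨t, ht⟩, by simp [hcdef]⟩
  refine ⟨c, hcinj, ?_, ?_⟩
  -- PART 1: measure one
  · set U : Set X := ⋃ k, atom (c k) with hU
    have hUm : MeasurableSet U := MeasurableSet.iUnion fun k => hatom_m _
    set δ : ℕ → ℝ≥0∞ := fun j => ENNReal.ofReal (Real.exp (-((j : ℝ) + 1))) with hδ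
    have hδpos : ∀ j, 0 < δ j := fun j => ENNReal.ofReal_pos.2 (Real.exp_pos _)
    set Small : ℕ → ℕ → Set X := fun N j =>
      ⋃ v : {v : Fin N → ℕ // μ (Bfam A N v) < δ j}, Bfam A N v.1 with hSmall
    set L : ℕ → ℝ≥0∞ := fun j => ENNReal.ofReal ((j : ℝ) + 1) with hL
    -- Uᶜ is contained in each ⋃ N, Small N j
    have hUcompl : ∀ j, Uᶜ ⊆ ⋃ N, Small N j := by
      intro j x hx
      have hx0 : μ (atom (s x)) = 0 := by
        by_contra h0
        have hpos : 0 < μ (atom (s x)) := pos_iff_ne_zero.2 h0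
        obtain ⟨k, hk⟩ := hcmem (s x) (Or.inl hpos)
        exact hx (Set.mem_iUnion.2 ⟨k, hk ▸ hx_atom x⟩)
      have hanti := Bfam_antitone A (s x)
      have hinf : ⨅ N, μ (Bfam A N (fun i => s x i)) = 0 := by
        rw [← hanti.measure_iInter
          (fun N => (Bfam_measurable hm N _).nullMeasurableSet) ⟨0, measure_ne_top μ _⟩,
          ← iInter_atom_eq]
        exact hx0
      have hlt : ∃ N, μ (Bfam A N (fun i => s x i)) < δ j := by
        by_contra h
        push_neg at h
        exact absurd (le_trans (le_iInf h) hinf.le) (not_le.2 (hδpos j))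
      obtain ⟨N, hN⟩ := hlt
      exact Set.mem_iUnion.2 ⟨N, Set.mem_iUnion.2
        ⟨⟨_, hN⟩, Set.mem_iInter.2 fun i => hs x i⟩⟩
    have hSmallMono : ∀ j, Monotone (fun N => Small N j) := by
      intro j N M hNM x hx
      obtain ⟨v, hxv⟩ := Set.mem_iUnion.1 hx
      have hveq : ∀ i : Fin N, v.1 i = s x i := fun i =>
        huniq x i (v.1 i) (Set.mem_iInter.1 hxv i)
      have hsubM : Bfam A M (fun i => s x i) ⊆ Bfam A N v.1 := by
        intro y hy
        refine Set.mem_iInter.2 fun i => ?_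
        rw [hveq i]
        exact Set.mem_iInter.1 hy ⟨i.1, lt_of_lt_of_le i.2 hNM⟩
      have hμM : μ (Bfam A M (fun i => s x i)) < δ j :=
        lt_of_le_of_lt (measure_mono hsubM) v.2
      exact Set.mem_iUnion.2 ⟨⟨_, hμM⟩, Set.mem_iInter.2 fun i => hs x i⟩
    have hSmallBound : ∀ N j, μ (Small N j) * L j ≤ C := by
      intro N j
      have hterm : ∀ v : {v : Fin N → ℕ // μ (Bfam A N v) < δ j},
          μ (Bfam A N v.1) * L j
            ≤ ENNReal.ofReal (Real.negMulLog (μ (Bfam A N v.1)).toReal) := by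
        intro v
        rcases eq_or_ne (μ (Bfam A N v.1)) 0 with h0 | h0
        · simp [h0]
        · rw [ofReal_negMulLog_eq _ (measure_ne_top μ _)]
          refine mul_le_mul_right (ENNReal.ofReal_le_ofReal ?_) _
          have hxpos : 0 < (μ (Bfam A N v.1)).toReal :=
            ENNReal.toReal_pos h0 (measure_ne_top μ _)
          have hxlt : (μ (Bfam A N v.1)).toReal < Real.exp (-((j : ℝ) + 1)) := by
            have h1 := (ENNReal.toReal_lt_toReal (measure_ne_top μ _)
              ENNReal.ofReal_ne_top).2 v.2
            rwa [ENNReal.toReal_ofReal (Real.exp_pos _).le] at h1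
          have h2 := Real.log_lt_log hxpos hxlt
          rw [Real.log_exp] at h2
          linarith
      calc μ (Small N j) * L j
          ≤ (∑' v : {v : Fin N → ℕ // μ (Bfam A N v) < δ j}, μ (Bfam A N v.1)) * L j :=
            mul_le_mul_left (measure_iUnion_le _) _
        _ = ∑' v : {v : Fin N → ℕ // μ (Bfam A N v) < δ j}, μ (Bfam A N v.1) * L j :=
            ENNReal.tsum_mul_right.symm
        _ ≤ ∑' v : {v : Fin N → ℕ // μ (Bfam A N v) < δ j},
              ENNReal.ofReal (Real.negMulLog (μ (Bfam A N v.1)).toReal) :=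
            ENNReal.tsum_le_tsum hterm
        _ ≤ ∑' v : Fin N → ℕ, ENNReal.ofReal (Real.negMulLog (μ (Bfam A N v)).toReal) :=
            ENNReal.tsum_comp_le_tsum_of_injective Subtype.coe_injective _
        _ = partitionEntropy μ (Bfam A N) := rfl
        _ ≤ ∑ n ∈ Finset.range N, partitionEntropy μ (A n) := entropy_Bfam_le μ hm hd hc N
        _ ≤ C := ENNReal.sum_le_tsum _
    have hUc : ∀ j, μ Uᶜ * L j ≤ C := by
      intro j
      have h1 : μ Uᶜ ≤ ⨆ N, μ (Small N j) := by
        calc μ Uᶜ ≤ μ (⋃ N, Small N j) := measure_mono (hUcompl j)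
          _ = ⨆ N, μ (Small N j) := (hSmallMono j).measure_iUnion
      calc μ Uᶜ * L j ≤ (⨆ N, μ (Small N j)) * L j := mul_le_mul_left h1 _
        _ = ⨆ N, μ (Small N j) * L j := ENNReal.iSup_mul _ _
        _ ≤ C := iSup_le fun N => hSmallBound N j
    have hUc0 : μ Uᶜ = 0 := by
      by_contra h
      obtain ⟨n, hn⟩ := ENNReal.exists_nat_gt (ENNReal.div_lt_top hfin h).ne
      have h3 : (n : ℝ≥0∞) ≤ L n := by
        rw [hL]
        calc (n : ℝ≥0∞) = ENNReal.ofReal (n : ℝ) := (ENNReal.ofReal_natCast n).symm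
          _ ≤ ENNReal.ofReal ((n : ℝ) + 1) := ENNReal.ofReal_le_ofReal (by linarith)
      have h4 : C / μ Uᶜ < L n := lt_of_lt_of_le hn h3
      have h5 : C < L n * μ Uᶜ :=
        (ENNReal.div_lt_iff (Or.inl h) (Or.inl (measure_ne_top μ _))).1 h4
      rw [mul_comm] at h5
      exact absurd (hUc n) (not_le.2 h5)
    have : μ U = 1 := (prob_compl_eq_zero_iff hUm).1 hUc0
    exact this
  -- PART 2: entropy bound
  · set P : ℕ → Set X := fun k => atom (c k) with hP
    have hPm : ∀ k, MeasurableSet (P k) := fun k => hatom_m _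
    have hPd : Pairwise (Function.onFun Disjoint P) := fun k k' h =>
      hatom_d (hcinj.ne h)
    have hPsub : ∀ k N, P k ⊆ Bfam A N (fun i => c k i) := by
      intro k N x hx
      exact Set.mem_iInter.2 fun i => Set.mem_iInter.1 hx i
    set F : ℕ → ℕ → ℝ≥0∞ := fun N k =>
      μ (P k) * ENNReal.ofReal (-Real.log ((μ (Bfam A N (fun i => c k i))).toReal)) with hF
    have hFmono : ∀ k, Monotone (fun N => F N k) := by
      intro k N M hNM
      rcases eq_or_ne (μ (P k)) 0 with h0 | h0
      · simp [hF, h0]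
      · refine mul_le_mul_right (ENNReal.ofReal_le_ofReal ?_) _
        have hsub : Bfam A M (fun i => c k i) ⊆ Bfam A N (fun i => c k i) :=
          Bfam_antitone A (c k) hNM
        have hposM : 0 < (μ (Bfam A M (fun i => c k i))).toReal :=
          ENNReal.toReal_pos
            (fun hz => h0 (le_antisymm (hz ▸ measure_mono (hPsub k M)) zero_le))
            (measure_ne_top μ _)
        have hle : (μ (Bfam A M (fun i => c k i))).toReal
            ≤ (μ (Bfam A N (fun i => c k i))).toReal :=
          ENNReal.toReal_mono (measure_ne_top μ _) (measure_mono hsub)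
        have := Real.log_le_log hposM hle
        linarith
    have hFsup : ∀ k, (⨆ N, F N k) = ENNReal.ofReal (Real.negMulLog (μ (P k)).toReal) := by
      intro k
      rcases eq_or_ne (μ (P k)) 0 with h0 | h0
      · simp [hF, h0]
      · have hPeq : P k = ⋂ N, Bfam A N (fun i => c k i) := iInter_atom_eq A (c k)
        have htend : Tendsto (fun N => μ (Bfam A N (fun i => c k i))) atTop (𝓝 (μ (P k))) := by
          rw [hPeq]
          exact tendsto_measure_iInter_atTop
            (fun N => (Bfam_measurable hm N _).nullMeasurableSet)
            (Bfam_antitone A (c k)) ⟨0, measure_ne_top μ _⟩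
        have htoReal : Tendsto (fun N => (μ (Bfam A N (fun i => c k i))).toReal) atTop
            (𝓝 (μ (P k)).toReal) :=
          (ENNReal.tendsto_toReal (measure_ne_top μ _)).comp htend
        have hPpos : 0 < (μ (P k)).toReal := ENNReal.toReal_pos h0 (measure_ne_top μ _)
        have hlog : Tendsto (fun N => Real.log ((μ (Bfam A N (fun i => c k i))).toReal)) atTop
            (𝓝 (Real.log (μ (P k)).toReal)) :=
          ((Real.continuousAt_log hPpos.ne').tendsto).comp htoReal
        have hofReal : Tendsto (fun N =>
            ENNReal.ofReal (-Real.log ((μ (Bfam A N (fun i => c k i))).toReal))) atTop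
            (𝓝 (ENNReal.ofReal (-Real.log (μ (P k)).toReal))) :=
          (ENNReal.continuous_ofReal.tendsto _).comp hlog.neg
        have hFt : Tendsto (fun N => F N k) atTop
            (𝓝 (μ (P k) * ENNReal.ofReal (-Real.log (μ (P k)).toReal))) :=
          ENNReal.Tendsto.const_mul hofReal (Or.inr (measure_ne_top μ _))
        rw [tendsto_nhds_unique (tendsto_atTop_iSup (hFmono k)) hFt,
          ofReal_negMulLog_eq _ (measure_ne_top μ _)]
    have hFbound : ∀ N, ∑' k, F N k ≤ C := by
      intro N
      set φ : ℕ → (Fin N → ℕ) := fun k => (fun i => c k i) with hφ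
      have h1 : ∑' k, F N k = ∑' v : Fin N → ℕ, ∑' k : φ ⁻¹' {v}, F N k.1 :=
        (ENNReal.tsum_fiberwise (fun k => F N k) φ).symm
      have h2 : ∀ v : Fin N → ℕ, (∑' k : φ ⁻¹' {v}, F N k.1)
          ≤ μ (Bfam A N v) * ENNReal.ofReal (-Real.log ((μ (Bfam A N v)).toReal)) := by
        intro v
        have he : ∀ k : φ ⁻¹' {v}, F N k.1
            = μ (P k.1) * ENNReal.ofReal (-Real.log ((μ (Bfam A N v)).toReal)) := by
          rintro ⟨k, hk⟩
          have : φ k = v := hk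
          simp only [hF, ← this, hφ]
        rw [tsum_congr he, ENNReal.tsum_mul_right]
        refine mul_le_mul_left ?_ _
        have hdisj : Pairwise (Function.onFun Disjoint (fun k : φ ⁻¹' {v} => P k.1)) :=
          fun k k' h => hPd fun h' => h (Subtype.ext h')
        rw [← measure_iUnion hdisj (fun k => hPm k.1)]
        refine measure_mono (Set.iUnion_subset fun k => ?_)
        have hkv : φ k.1 = v := k.2
        exact fun x hx => by rw [← hkv]; exact hPsub k.1 N hx
      calc ∑' k, F N k = ∑' v : Fin N → ℕ, ∑' k : φ ⁻¹' {v}, F N k.1 := h1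
        _ ≤ ∑' v : Fin N → ℕ,
              μ (Bfam A N v) * ENNReal.ofReal (-Real.log ((μ (Bfam A N v)).toReal)) :=
            ENNReal.tsum_le_tsum h2
        _ = ∑' v : Fin N → ℕ, ENNReal.ofReal (Real.negMulLog (μ (Bfam A N v)).toReal) :=
            tsum_congr fun v => (ofReal_negMulLog_eq _ (measure_ne_top μ _)).symm
        _ = partitionEntropy μ (Bfam A N) := rfl
        _ ≤ ∑ n ∈ Finset.range N, partitionEntropy μ (A n) := entropy_Bfam_le μ hm hd hc N
        _ ≤ C := ENNReal.sum_le_tsum _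
    calc partitionEntropy μ (fun k => ⋂ n, A n (c k n))
        = ∑' k, ENNReal.ofReal (Real.negMulLog (μ (P k)).toReal) := rfl
      _ = ∑' k, ⨆ N, F N k := tsum_congr fun k => (hFsup k).symm
      _ = ⨆ N, ∑' k, F N k := tsum_iSup_nat hFmono
      _ ≤ C := iSup_le hFbound
end

section
/- Let (X, 𝒳, μ) be a standard probability space, let I be a linearly ordered set, and let (𝒜ᵢ)_{i∈I} be a family of sub-σ-algebras of 𝒳 that is monotone: 𝒜ᵢ ⊆ 𝒜ⱼ whenever i ≤ j. Then there exists a countable subset J ⊆ I such that the σ-algebra generated by ⋃_{i∈I} 𝒜ᵢ equals (up to null sets) the σ-algebra generated by ⋃_{j∈J} 𝒜ⱼ. -/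
open MeasureTheory
open scoped ENNReal

/-- A monotone family of sub-σ-algebras of a standard probability space, indexed
by a linearly ordered set I, admits a countable subset J ⊆ I such that the σ-algebra generated
by the whole family equals the one generated by the subfamily, up to null sets. -/
theorem monotone_family_countable_cofinal_subfamily
    {X : Type*} [mX : MeasurableSpace X] [StandardBorelSpace X]
    (μ : Measure X) [IsProbabilityMeasure μ]
    {I : Type*} [LinearOrder I]
    (𝒜 : I → MeasurableSpace X)
    (hle : ∀ i, 𝒜 i ≤ mX)
    (hmono : Monotone 𝒜) :
    ∃ J : Set I, J.Countable ∧
      ∀ s : Set X, MeasurableSet[⨆ i, 𝒜 i] s →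
        ∃ t : Set X, MeasurableSet[⨆ j ∈ J, 𝒜 j] t ∧ μ (symmDiff s t) = 0 := by
  classical
  rcases isEmpty_or_nonempty I with hI | hI
  · refine ⟨∅, Set.countable_empty, fun s hs => ?_⟩
    rw [iSup_of_empty] at hs
    refine ⟨s, ?_, by simp⟩
    have : (⨆ j ∈ (∅ : Set I), 𝒜 j) = ⊥ := by simp
    rw [this]
    exact hs
  obtain ⟨D, hDc, hDdense⟩ := exists_countable_measureDense (μ := μ)
  -- Setup
  set F : MeasurableSpace X := ⨆ i, 𝒜 i with hF
  have hFle : F ≤ mX := iSup_le hle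
  set 𝒞 : Set (Set X) := ⋃ i, {s | MeasurableSet[𝒜 i] s} with h𝒞
  have h𝒞alg : IsSetAlgebra 𝒞 := by
    constructor
    · exact Set.mem_iUnion.2 ⟨Classical.arbitrary I, @MeasurableSet.empty X (𝒜 (Classical.arbitrary I))⟩
    · intro s hs
      rcases Set.mem_iUnion.1 hs with ⟨i, hi⟩
      exact Set.mem_iUnion.2 ⟨i, MeasurableSet.compl hi⟩
    · intro s t hs ht
      rcases Set.mem_iUnion.1 hs with ⟨i, hi⟩
      rcases Set.mem_iUnion.1 ht with ⟨j, hj⟩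
      rcases le_total i j with hij | hij
      · exact Set.mem_iUnion.2 ⟨j, MeasurableSet.union (hmono hij _ hi) hj⟩
      · exact Set.mem_iUnion.2 ⟨i, MeasurableSet.union hi (hmono hij _ hj)⟩
  have hgen : F = MeasurableSpace.generateFrom 𝒞 :=
    (MeasurableSpace.generateFrom_iUnion_measurableSet 𝒜).symm
  have h𝒞meas : ∀ a ∈ 𝒞, MeasurableSet[F] a := by
    intro a ha
    rw [hgen]
    exact MeasurableSpace.measurableSet_generateFrom ha
  set ν : @Measure X F := μ.trim hFle with hν
  haveI hνfin : IsFiniteMeasure ν := hν ▸ isFiniteMeasure_trim hFle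
  have h𝒞dense : ν.MeasureDense 𝒞 :=
    @Measure.MeasureDense.of_generateFrom_isSetAlgebra_finite X F ν 𝒞 _ h𝒞alg hgen
  -- Choice of indices
  set P : Set X → ℕ → Prop := fun d n =>
    ∃ b ∈ 𝒞, μ (symmDiff d b) < ENNReal.ofReal (1 / (n + 1)) with hP
  set f : Set X → ℕ → I := fun d n =>
    if h : P d n then (Set.mem_iUnion.1 h.choose_spec.1).choose else Classical.arbitrary I
    with hf
  set g : Set X → ℕ → Set X := fun d n => if h : P d n then h.choose else ∅ with hg
  have hfg : ∀ d n, P d n → MeasurableSet[𝒜 (f d n)] (g d n) ∧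
      μ (symmDiff d (g d n)) < ENNReal.ofReal (1 / (n + 1)) := by
    intro d n h
    simp only [hf, hg, dif_pos h]
    rw [show f d n = (Set.mem_iUnion.1 h.choose_spec.1).choose from dif_pos h]
    exact ⟨Set.mem_setOf_eq.mp (Set.mem_iUnion.1 h.choose_spec.1).choose_spec, h.choose_spec.2⟩
  set J : Set I := ⋃ d ∈ D, Set.range (f d) with hJ
  have hJc : J.Countable := hDc.biUnion fun _ _ => Set.countable_range _
  set G : MeasurableSpace X := ⨆ j ∈ J, 𝒜 j with hG
  -- Approximation
  have key : ∀ s, MeasurableSet[F] s → ∀ ε : ℝ, 0 < ε →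
      ∃ b, MeasurableSet[G] b ∧ μ (symmDiff s b) < ENNReal.ofReal ε := by
    intro s hs ε hε
    obtain ⟨n, hn⟩ := exists_nat_one_div_lt (show (0:ℝ) < ε / 4 by linarith)
    have hpos : (0:ℝ) < 1 / (n + 1) := by positivity
    obtain ⟨a, ha𝒞, haμ⟩ := @Measure.MeasureDense.approx X F ν 𝒞 h𝒞dense s hs (@measure_ne_top X F ν hνfin s) (1 / (n + 1)) hpos
    have haF : MeasurableSet[F] a := h𝒞meas a ha𝒞
    have haμ' : μ (symmDiff s a) < ENNReal.ofReal (1 / (n + 1)) := by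
      rwa [hν, trim_measurableSet_eq hFle (MeasurableSet.symmDiff hs haF)] at haμ
    obtain ⟨d, hdD, hdμ⟩ :=
      @Measure.MeasureDense.approx X mX μ D hDdense a (hFle _ haF) (measure_ne_top μ a) (1 / (n + 1)) hpos
    have hPd : P d n := ⟨a, ha𝒞, by rwa [symmDiff_comm]⟩
    obtain ⟨hgmeas, hgμ⟩ := hfg d n hPd
    have hJmem : f d n ∈ J := Set.mem_biUnion hdD ⟨n, rfl⟩
    refine ⟨g d n, (le_biSup 𝒜 hJmem : 𝒜 (f d n) ≤ G) _ hgmeas, ?_⟩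
    have t1 : μ (symmDiff s (g d n)) ≤ μ (symmDiff s a) + μ (symmDiff a (g d n)) :=
      le_trans (measure_mono (symmDiff_triangle s a _)) (measure_union_le _ _)
    have t2 : μ (symmDiff a (g d n)) ≤ μ (symmDiff a d) + μ (symmDiff d (g d n)) :=
      le_trans (measure_mono (symmDiff_triangle a d _)) (measure_union_le _ _)
    have hlt : μ (symmDiff s (g d n)) <
        ENNReal.ofReal (1 / (n + 1)) + (ENNReal.ofReal (1 / (n + 1)) +
          ENNReal.ofReal (1 / (n + 1))) :=
      lt_of_le_of_lt (t1.trans (add_le_add (le_refl _) t2))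
        (ENNReal.add_lt_add haμ' (ENNReal.add_lt_add hdμ hgμ))
    refine hlt.trans_le ?_
    rw [← ENNReal.ofReal_add hpos.le hpos.le, ← ENNReal.ofReal_add hpos.le (by positivity)]
    exact ENNReal.ofReal_le_ofReal (by linarith)
  have key' : ∀ s, MeasurableSet[F] s → ∀ ε : ℝ≥0∞, ε ≠ 0 →
      ∃ b, MeasurableSet[G] b ∧ μ (symmDiff s b) < ε := by
    intro s hs ε hε
    rcases eq_or_ne ε ∞ with rfl | hε'
    · exact ⟨∅, MeasurableSet.empty, measure_lt_top μ _⟩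
    · obtain ⟨b, hbG, hbμ⟩ := key s hs ε.toReal (ENNReal.toReal_pos hε hε')
      rw [ENNReal.ofReal_toReal hε'] at hbμ
      exact ⟨b, hbG, hbμ⟩
  -- Conclusion
  refine ⟨J, hJc, fun s hs => ?_⟩
  have hb : ∀ k : ℕ, ∃ b, MeasurableSet[G] b ∧ μ (symmDiff s b) < (2:ℝ≥0∞)⁻¹ ^ k :=
    fun k => key' s hs _ (pow_ne_zero _ (by simp))
  choose b hbG hbμ using hb
  set t : Set X := ⋂ n, ⋃ k, ⋃ (_ : n ≤ k), b k with ht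
  have htG : MeasurableSet[G] t :=
    MeasurableSet.iInter fun n =>
      MeasurableSet.iUnion fun k => MeasurableSet.iUnion fun _ => hbG k
  refine ⟨t, htG, ?_⟩
  have hsub : ∀ n : ℕ, symmDiff s t ⊆ ⋃ j : ℕ, symmDiff s (b (n + j)) := by
    intro n x hx
    rcases Set.mem_symmDiff.1 hx with ⟨hxs, hxt⟩ | ⟨hxt, hxs⟩
    · simp only [ht, Set.mem_iInter, Set.mem_iUnion, not_forall, not_exists] at hxt
      obtain ⟨m, hm⟩ := hxt
      exact Set.mem_iUnion.2 ⟨m, Set.mem_symmDiff.2 (Or.inl ⟨hxs, hm (n + m) (by omega)⟩)⟩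
    · have := Set.mem_iInter.1 hxt n
      simp only [Set.mem_iUnion] at this
      obtain ⟨k, hnk, hxk⟩ := this
      refine Set.mem_iUnion.2 ⟨k - n, Set.mem_symmDiff.2 (Or.inr ⟨?_, hxs⟩)⟩
      rwa [show n + (k - n) = k by omega]
  have hbound : ∀ n : ℕ, μ (symmDiff s t) ≤ (2:ℝ≥0∞)⁻¹ ^ n * 2 := by
    intro n
    calc μ (symmDiff s t) ≤ μ (⋃ j : ℕ, symmDiff s (b (n + j))) := measure_mono (hsub n)
      _ ≤ ∑' j : ℕ, μ (symmDiff s (b (n + j))) := measure_iUnion_le _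
      _ ≤ ∑' j : ℕ, (2:ℝ≥0∞)⁻¹ ^ (n + j) := ENNReal.tsum_le_tsum fun j => (hbμ (n + j)).le
      _ = (2:ℝ≥0∞)⁻¹ ^ n * ∑' j : ℕ, (2:ℝ≥0∞)⁻¹ ^ j := by
          simp_rw [pow_add]; rw [ENNReal.tsum_mul_left]
      _ = (2:ℝ≥0∞)⁻¹ ^ n * 2 := by
          rw [ENNReal.tsum_geometric]
          norm_num
  have htend : Filter.Tendsto (fun n : ℕ => (2:ℝ≥0∞)⁻¹ ^ n * 2) Filter.atTop (nhds 0) := by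
    have h0 : Filter.Tendsto (fun n : ℕ => (2:ℝ≥0∞)⁻¹ ^ n) Filter.atTop (nhds 0) :=
      ENNReal.tendsto_pow_atTop_nhds_zero_of_lt_one (by norm_num)
    simpa using ENNReal.Tendsto.mul_const h0 (Or.inr (by norm_num))
  exact le_antisymm (ge_of_tendsto' htend hbound) (zero_le ..)
end
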